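/- Let ω = 2n for some positive integer n, set γ = 1/(1−ω²), and suppose |σ| < |γ|. Then the elastic impact oscillator ẍ + x = cos(ωt) with wall at x = σ has unbounded trajectories: there exists an elastic impacting motion whose impact velocities satisfy sup_n v_n = ∞ (indeed v_n → ∞). -/

import Mathlib

open Real

/-- An elastic impacting motion of the impact oscillator with forcing `p` and
clearance `σ`: a strictly increasing sequence of impact times `t n → ∞`, a
continuous trajectory `x ≤ σ` with `x (t n) = σ`, twice continuously
differentiable between consecutive impacts where it satisfies `x'' + x = p`,
and at each impact the one-sided velocities satisfy `x'(tₙ⁻) = v n > 0` and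
`x'(tₙ⁺) = -(v n)` (coefficient of restitution `r = 1`). -/
def ElasticImpactingMotion (p : ℝ → ℝ) (σ : ℝ) (t v : ℕ → ℝ) (x : ℝ → ℝ) : Prop :=
  StrictMono t ∧
  Filter.Tendsto t Filter.atTop Filter.atTop ∧
  Continuous x ∧
  (∀ s, x s ≤ σ) ∧
  (∀ n, x (t n) = σ) ∧
  (∀ n, ∃ xd : ℝ → ℝ,
    (∀ s ∈ Set.Ioo (t n) (t (n + 1)), HasDerivAt x (xd s) s) ∧
    (∀ s ∈ Set.Ioo (t n) (t (n + 1)), HasDerivAt xd (p s - x s) s)) ∧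
  (∀ n, 0 < v n ∧
    HasDerivWithinAt x (v n) (Set.Iio (t n)) (t n) ∧
    HasDerivWithinAt x (-(v n)) (Set.Ioi (t n)) (t n))

namespace IAux

open Set

noncomputable def ph (σ γ : ℝ) : ℝ := Real.arccos (σ / γ)
noncomputable def tk (ω σ γ : ℝ) (k : ℤ) : ℝ := ph σ γ / ω + k * π
noncomputable def d0 (ω σ γ : ℝ) : ℝ := 2 * (-γ) * ω * Real.sin (ph σ γ)
noncomputable def v0 (ω γ : ℝ) : ℝ := π * ω * (-γ)
noncomputable def vk (ω σ γ : ℝ) (k : ℤ) : ℝ := v0 ω γ + k * d0 ω σ γ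
noncomputable def bk (ω σ γ : ℝ) (k : ℤ) : ℝ := -(vk ω σ γ k) + γ * ω * Real.sin (ph σ γ)
noncomputable def F (ω σ γ : ℝ) (k : ℤ) (s : ℝ) : ℝ :=
  bk ω σ γ k * Real.sin (s - tk ω σ γ k) + γ * Real.cos (ω * s)
noncomputable def Fd (ω σ γ : ℝ) (k : ℤ) (s : ℝ) : ℝ :=
  bk ω σ γ k * Real.cos (s - tk ω σ γ k) - γ * ω * Real.sin (ω * s)
noncomputable def X (ω σ γ : ℝ) (s : ℝ) : ℝ :=
  if s ≤ tk ω σ γ 0 then σ + v0 ω γ * (s - tk ω σ γ 0)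
  else F ω σ γ ⌊(s - tk ω σ γ 0) / π⌋ s

variable {ω σ γ : ℝ}

lemma cos_lip (a b : ℝ) : |Real.cos a - Real.cos b| ≤ |a - b| := by
  rw [Real.cos_sub_cos]
  have h1 : |Real.sin ((a + b) / 2)| ≤ 1 := abs_sin_le_one _
  have h2 : |Real.sin ((a - b) / 2)| ≤ |(a - b) / 2| := Real.abs_sin_le_abs
  calc |(-2) * Real.sin ((a + b) / 2) * Real.sin ((a - b) / 2)|
      = 2 * |Real.sin ((a + b) / 2)| * |Real.sin ((a - b) / 2)| := by
        rw [abs_mul, abs_mul]; simp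
    _ ≤ 2 * 1 * |(a - b) / 2| := by
        gcongr
    _ = |a - b| := by rw [abs_div]; simp; ring

section hyp
variable (hω : 0 < ω) (hγ : γ < 0) (hσ : |σ| < -γ)

include hγ hσ in
lemma ratio_lt : -1 < σ / γ ∧ σ / γ < 1 := by
  have h : |σ / γ| < 1 := by
    rw [abs_div, abs_of_neg hγ, div_lt_one (by linarith)]
    exact hσ
  exact abs_lt.1 h

include hγ hσ in
lemma cos_ph : Real.cos (ph σ γ) = σ / γ :=
  Real.cos_arccos (le_of_lt (ratio_lt hγ hσ).1) (le_of_lt (ratio_lt hγ hσ).2)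

include hγ hσ in
lemma gcos : γ * Real.cos (ph σ γ) = σ := by
  rw [cos_ph hγ hσ, mul_div_cancel₀ _ (ne_of_lt hγ)]

include hγ hσ in
lemma ph_pos : 0 < ph σ γ := Real.arccos_pos.2 (ratio_lt hγ hσ).2

include hγ hσ in
lemma ph_lt_pi : ph σ γ < π := by
  refine lt_of_le_of_ne (Real.arccos_le_pi _) (fun h => ?_)
  have := Real.arccos_eq_pi.1 h
  have := (ratio_lt hγ hσ).1
  linarith

include hγ hσ in
lemma sin_ph_pos : 0 < Real.sin (ph σ γ) :=
  Real.sin_pos_of_pos_of_lt_pi (ph_pos hγ hσ) (ph_lt_pi hγ hσ)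

lemma tk_eq (k : ℤ) : tk ω σ γ k = tk ω σ γ 0 + k * π := by
  simp [tk]

lemma tk_succ (k : ℤ) : tk ω σ γ (k + 1) = tk ω σ γ k + π := by
  simp [tk]; push_cast; ring

include hω in
lemma omega_tk (N : ℤ) (hN : ω = 2 * N) (k : ℤ) :
    ω * tk ω σ γ k = ph σ γ + (k * N : ℤ) * (2 * π) := by
  have h : ω * (ph σ γ / ω) = ph σ γ := mul_div_cancel₀ _ (ne_of_gt hω)
  rw [tk, mul_add, h, hN]
  push_cast; ring

include hω in
lemma sin_omega_tk (N : ℤ) (hN : ω = 2 * N) (k : ℤ) :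
    Real.sin (ω * tk ω σ γ k) = Real.sin (ph σ γ) := by
  rw [omega_tk hω N hN k, Real.sin_add_int_mul_two_pi]

include hω in
lemma cos_omega_tk (N : ℤ) (hN : ω = 2 * N) (k : ℤ) :
    Real.cos (ω * tk ω σ γ k) = Real.cos (ph σ γ) := by
  rw [omega_tk hω N hN k, Real.cos_add_int_mul_two_pi]

include hω hγ hσ in
lemma F_tk (N : ℤ) (hN : ω = 2 * N) (k : ℤ) : F ω σ γ k (tk ω σ γ k) = σ := by
  rw [F, sub_self, Real.sin_zero, mul_zero, zero_add, cos_omega_tk hω N hN, gcos hγ hσ]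

include hω hγ hσ in
lemma F_tk_succ (N : ℤ) (hN : ω = 2 * N) (k : ℤ) :
    F ω σ γ k (tk ω σ γ (k + 1)) = σ := by
  rw [F, tk_succ, add_sub_cancel_left, Real.sin_pi, mul_zero, zero_add,
    ← tk_succ, cos_omega_tk hω N hN, gcos hγ hσ]

include hω hγ hσ in
lemma v0_pos : 0 < v0 ω γ := by
  have := Real.pi_pos
  have : 0 < -γ := by linarith
  unfold v0; positivity

include hω hγ hσ in
lemma d0_pos : 0 < d0 ω σ γ := by
  have h := sin_ph_pos hγ hσ
  have : 0 < -γ := by linarith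
  unfold d0; positivity

include hω hγ hσ in
lemma v0_le_vk (k : ℤ) (hk : 0 ≤ k) : v0 ω γ ≤ vk ω σ γ k := by
  have h := d0_pos hω hγ hσ
  have : (0:ℝ) ≤ (k:ℝ) * d0 ω σ γ := mul_nonneg (by exact_mod_cast hk) h.le
  unfold vk; linarith

include hω hγ hσ in
lemma vk_pos (k : ℤ) (hk : 0 ≤ k) : 0 < vk ω σ γ k :=
  lt_of_lt_of_le (v0_pos hω hγ hσ) (v0_le_vk hω hγ hσ k hk)

include hω hγ hσ in
lemma neg_bk (k : ℤ) (hk : 0 ≤ k) : π * ω * (-γ) ≤ -(bk ω σ γ k) := by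
  have h1 := v0_le_vk hω hγ hσ k hk
  have h2 : 0 ≤ (-γ) * ω * Real.sin (ph σ γ) := by
    have := sin_ph_pos hγ hσ
    have : 0 < -γ := by linarith
    positivity
  unfold bk v0 at *
  nlinarith

lemma hasDerivAt_F (k : ℤ) (s : ℝ) : HasDerivAt (F ω σ γ k) (Fd ω σ γ k s) s := by
  have h1 : HasDerivAt (fun s => Real.sin (s - tk ω σ γ k))
      (Real.cos (s - tk ω σ γ k)) s := by
    simpa [Function.comp_def] using (Real.hasDerivAt_sin (s - tk ω σ γ k)).comp s
      ((hasDerivAt_id s).sub_const (tk ω σ γ k))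
  have h2 : HasDerivAt (fun s => Real.cos (ω * s)) (-Real.sin (ω * s) * ω) s := by
    simpa [Function.comp_def] using (Real.hasDerivAt_cos (ω * s)).comp s ((hasDerivAt_id s).const_mul ω)
  have := ((h1.const_mul (bk ω σ γ k)).add (h2.const_mul γ))
  exact this.congr_deriv (by unfold Fd; ring)

lemma hasDerivAt_Fd (hγ1 : γ * (1 - ω ^ 2) = 1) (k : ℤ) (s : ℝ) :
    HasDerivAt (Fd ω σ γ k) (Real.cos (ω * s) - F ω σ γ k s) s := by
  have h1 : HasDerivAt (fun s => Real.cos (s - tk ω σ γ k))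
      (-Real.sin (s - tk ω σ γ k)) s := by
    simpa [Function.comp_def] using (Real.hasDerivAt_cos (s - tk ω σ γ k)).comp s
      ((hasDerivAt_id s).sub_const (tk ω σ γ k))
  have h2 : HasDerivAt (fun s => Real.sin (ω * s)) (Real.cos (ω * s) * ω) s := by
    simpa [Function.comp_def] using (Real.hasDerivAt_sin (ω * s)).comp s ((hasDerivAt_id s).const_mul ω)
  have hcomb := ((h1.const_mul (bk ω σ γ k)).sub ((h2.const_mul ω).const_mul γ))
  have heq : Fd ω σ γ k = fun x => bk ω σ γ k * Real.cos (x - tk ω σ γ k) -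
      γ * (ω * Real.sin (ω * x)) := by
    funext x; rw [Fd]; ring
  rw [heq]
  exact hcomb.congr_deriv (by unfold F; linear_combination (Real.cos (ω * s)) * hγ1)

include hω in
lemma Fd_tk (k : ℤ) (N : ℤ) (hN : ω = 2 * N) :
    Fd ω σ γ k (tk ω σ γ k) = -(vk ω σ γ k) := by
  rw [Fd, sub_self, Real.cos_zero, mul_one, sin_omega_tk hω N hN, bk]; ring

include hω in
lemma Fd_tk_succ (k : ℤ) (N : ℤ) (hN : ω = 2 * N) :
    Fd ω σ γ k (tk ω σ γ (k + 1)) = vk ω σ γ (k + 1) := by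
  rw [Fd, tk_succ, add_sub_cancel_left, Real.cos_pi, ← tk_succ,
    sin_omega_tk hω N hN, bk, vk, vk, d0]
  push_cast; ring

lemma floor_eq (k : ℤ) (s : ℝ) (hs : s ∈ Ico (tk ω σ γ k) (tk ω σ γ (k + 1))) :
    ⌊(s - tk ω σ γ 0) / π⌋ = k := by
  have hπ := Real.pi_pos
  rw [Int.floor_eq_iff]
  rw [tk_eq k] at hs
  rw [tk_eq (k+1)] at hs
  constructor
  · rw [le_div_iff₀ hπ]; have := hs.1; linarith
  · rw [div_lt_iff₀ hπ]; have := hs.2; push_cast at this ⊢; linarith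

include hω hγ hσ in
lemma X_eq_F (N : ℤ) (hN : ω = 2 * N) (k : ℤ) (hk : 0 ≤ k) (s : ℝ)
    (hs : s ∈ Icc (tk ω σ γ k) (tk ω σ γ (k + 1))) : X ω σ γ s = F ω σ γ k s := by
  have hπ := Real.pi_pos
  rcases lt_or_eq_of_le hs.2 with h2 | h2
  · -- s < tk (k+1)
    rcases lt_or_eq_of_le hs.1 with h1 | h1
    · -- tk k < s : in particular tk 0 < s
      have h0 : tk ω σ γ 0 ≤ tk ω σ γ k := by
        rw [tk_eq k]
        have : (0:ℝ) ≤ (k:ℝ) * π := mul_nonneg (by exact_mod_cast hk) hπ.le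
        linarith
      rw [X, if_neg (by linarith), floor_eq k s ⟨hs.1, h2⟩]
    · -- s = tk k
      rcases lt_or_eq_of_le hk with hk1 | hk1
      · have h0 : tk ω σ γ 0 < tk ω σ γ k := by
          rw [tk_eq k]
          have : (0:ℝ) < (k:ℝ) * π := mul_pos (by exact_mod_cast hk1) hπ
          linarith
        rw [X, if_neg (by linarith), floor_eq k s ⟨hs.1, h2⟩]
      · subst hk1
        rw [X, if_pos (le_of_eq h1.symm), ← h1, F_tk hω hγ hσ N hN, sub_self,
          mul_zero, add_zero]
  · -- s = tk (k+1)
    subst h2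
    have h0 : tk ω σ γ 0 < tk ω σ γ (k+1) := by
      rw [tk_eq (k+1)]
      have : (0:ℝ) < ((k+1:ℤ):ℝ) * π := by
        apply mul_pos _ hπ
        exact_mod_cast by omega
      linarith
    have hfl : ⌊(tk ω σ γ (k+1) - tk ω σ γ 0) / π⌋ = k + 1 :=
      floor_eq (k+1) _ ⟨le_refl _, by rw [tk_succ (k+1)]; linarith⟩
    rw [X, if_neg (not_le.2 h0), hfl, F_tk hω hγ hσ N hN (k+1),
      F_tk_succ hω hγ hσ N hN k]

lemma jordan {θ : ℝ} (hθ0 : 0 ≤ θ) (hθπ : θ ≤ π) :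
    min θ (π - θ) ≤ (π / 2) * Real.sin θ := by
  have hπ := Real.pi_pos
  by_cases hθ : θ ≤ π / 2
  · have h := Real.mul_le_sin hθ0 hθ
    have he : (π / 2) * (2 / π * θ) = θ := by field_simp
    have : θ ≤ (π / 2) * Real.sin θ := by
      calc θ = (π / 2) * (2 / π * θ) := he.symm
        _ ≤ (π / 2) * Real.sin θ := by
            apply mul_le_mul_of_nonneg_left h (by linarith)
    exact le_trans (min_le_left _ _) this
  · push_neg at hθ
    have h0 : 0 ≤ π - θ := by linarith
    have h1 : π - θ ≤ π / 2 := by linarith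
    have h := Real.mul_le_sin h0 h1
    rw [Real.sin_pi_sub] at h
    have he : (π / 2) * (2 / π * (π - θ)) = π - θ := by field_simp
    have : π - θ ≤ (π / 2) * Real.sin θ := by
      calc π - θ = (π / 2) * (2 / π * (π - θ)) := he.symm
        _ ≤ (π / 2) * Real.sin θ := by
            apply mul_le_mul_of_nonneg_left h (by linarith)
    exact le_trans (min_le_right _ _) this

include hω hγ hσ in
lemma F_le (N : ℤ) (hN : ω = 2 * N) (k : ℤ) (hk : 0 ≤ k) (s : ℝ)
    (hs : s ∈ Icc (tk ω σ γ k) (tk ω σ γ (k + 1))) : F ω σ γ k s ≤ σ := by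
  have hπ := Real.pi_pos
  set θ := s - tk ω σ γ k with hθ
  have hθ0 : 0 ≤ θ := by simp only [hθ]; linarith [hs.1]
  have hθπ : θ ≤ π := by
    have := hs.2; rw [tk_succ] at this; simp only [hθ]; linarith
  have hsin : 0 ≤ Real.sin θ := Real.sin_nonneg_of_nonneg_of_le_pi hθ0 hθπ
  have hj := jordan hθ0 hθπ
  have hγ' : 0 < -γ := by linarith
  -- Lipschitz bounds from both endpoints
  have lip1 : |Real.cos (ω * s) - Real.cos (ω * tk ω σ γ k)| ≤ ω * θ := by
    have := cos_lip (ω * s) (ω * tk ω σ γ k)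
    have he : |ω * s - ω * tk ω σ γ k| = ω * θ := by
      rw [← mul_sub, abs_mul, abs_of_pos hω, abs_of_nonneg hθ0]
    linarith [he ▸ this]
  have lip2 : |Real.cos (ω * s) - Real.cos (ω * tk ω σ γ (k + 1))| ≤ ω * (π - θ) := by
    have := cos_lip (ω * s) (ω * tk ω σ γ (k + 1))
    have he : |ω * s - ω * tk ω σ γ (k + 1)| = ω * (π - θ) := by
      rw [← mul_sub, abs_mul, abs_of_pos hω, tk_succ]
      rw [abs_of_nonpos (by linarith [hs.2, tk_succ (ω := ω) (σ := σ) (γ := γ) k])]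
      simp only [hθ]; ring
    linarith [he ▸ this]
  rw [cos_omega_tk hω N hN] at lip1 lip2
  -- key bound
  have key : γ * Real.cos (ω * s) - σ ≤ (-γ) * (ω * min θ (π - θ)) := by
    rw [← gcos hγ hσ]
    have habs : γ * Real.cos (ω * s) - γ * Real.cos (ph σ γ) ≤
        (-γ) * |Real.cos (ω * s) - Real.cos (ph σ γ)| := by
      rw [← mul_sub]
      calc γ * (Real.cos (ω * s) - Real.cos (ph σ γ))
          ≤ |γ * (Real.cos (ω * s) - Real.cos (ph σ γ))| := le_abs_self _
        _ = (-γ) * |Real.cos (ω * s) - Real.cos (ph σ γ)| := by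
            rw [abs_mul, abs_of_neg hγ]
    rcases min_cases θ (π - θ) with ⟨hm, _⟩ | ⟨hm, _⟩ <;> rw [hm] <;>
      [ (exact le_trans habs (by nlinarith [lip1]));
        (exact le_trans habs (by nlinarith [lip2]))]
  have hbk := neg_bk hω hγ hσ k hk
  have hFs : F ω σ γ k s = bk ω σ γ k * Real.sin θ + γ * Real.cos (ω * s) := rfl
  rw [hFs]
  have hb : bk ω σ γ k * Real.sin θ ≤ -(π * ω * (-γ)) * Real.sin θ :=
    mul_le_mul_of_nonneg_right (by linarith) hsin
  have hmin : (-γ) * (ω * min θ (π - θ)) ≤ (-γ) * (ω * ((π / 2) * Real.sin θ)) := by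
    apply mul_le_mul_of_nonneg_left _ hγ'.le
    exact mul_le_mul_of_nonneg_left hj hω.le
  have hprod : 0 ≤ (-γ) * ω * Real.sin θ := by positivity
  nlinarith [mul_nonneg hπ.le hprod]

include hω hγ hσ in
lemma floor_mem (N : ℤ) (hN : ω = 2 * N) (s : ℝ) (hs : tk ω σ γ 0 < s) :
    0 ≤ ⌊(s - tk ω σ γ 0) / π⌋ ∧
    s ∈ Ico (tk ω σ γ ⌊(s - tk ω σ γ 0) / π⌋) (tk ω σ γ (⌊(s - tk ω σ γ 0) / π⌋ + 1)) := by
  have hπ := Real.pi_pos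
  set k := ⌊(s - tk ω σ γ 0) / π⌋ with hkdef
  have hk0 : 0 ≤ k := Int.floor_nonneg.2 (div_nonneg (by linarith) hπ.le)
  have h1 : (k : ℝ) ≤ (s - tk ω σ γ 0) / π := Int.floor_le _
  have h2 : (s - tk ω σ γ 0) / π < k + 1 := Int.lt_floor_add_one _
  rw [le_div_iff₀ hπ] at h1
  rw [div_lt_iff₀ hπ] at h2
  refine ⟨hk0, ?_, ?_⟩
  · rw [tk_eq k]; linarith
  · rw [tk_eq (k + 1)]; push_cast; linarith

include hω hγ hσ in
lemma X_le (N : ℤ) (hN : ω = 2 * N) (s : ℝ) : X ω σ γ s ≤ σ := by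
  by_cases hs : s ≤ tk ω σ γ 0
  · rw [X, if_pos hs]
    have h := v0_pos hω hγ hσ
    nlinarith
  · push_neg at hs
    obtain ⟨hk0, hmem⟩ := floor_mem hω hγ hσ N hN s hs
    rw [X_eq_F hω hγ hσ N hN _ hk0 s (Ico_subset_Icc_self hmem)]
    exact F_le hω hγ hσ N hN _ hk0 s (Ico_subset_Icc_self hmem)

include hω hγ hσ in
lemma tk_lt_succ (k : ℤ) : tk ω σ γ k < tk ω σ γ (k + 1) := by
  rw [tk_succ]; linarith [Real.pi_pos]

include hω hγ hσ in
lemma hasDerivAt_X_Ioo (N : ℤ) (hN : ω = 2 * N) (k : ℤ) (hk : 0 ≤ k) (s : ℝ)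
    (hs : s ∈ Ioo (tk ω σ γ k) (tk ω σ γ (k + 1))) :
    HasDerivAt (X ω σ γ) (Fd ω σ γ k s) s := by
  apply (hasDerivAt_F k s).congr_of_eventuallyEq
  filter_upwards [Ioo_mem_nhds hs.1 hs.2] with y hy
  exact X_eq_F hω hγ hσ N hN k hk y (Ioo_subset_Icc_self hy)

include hω hγ hσ in
lemma right_deriv (N : ℤ) (hN : ω = 2 * N) (k : ℤ) (hk : 0 ≤ k) :
    HasDerivWithinAt (X ω σ γ) (-(vk ω σ γ k)) (Ioi (tk ω σ γ k)) (tk ω σ γ k) := by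
  have h := (hasDerivAt_F (ω := ω) (σ := σ) (γ := γ) k (tk ω σ γ k)).hasDerivWithinAt
    (s := Ioi (tk ω σ γ k))
  rw [Fd_tk hω k N hN] at h
  apply h.congr_of_eventuallyEq _ (X_eq_F hω hγ hσ N hN k hk _
    ⟨le_refl _, (tk_lt_succ hω hγ hσ k).le⟩)
  have hmem : Ioi (tk ω σ γ k) ∩ Iio (tk ω σ γ (k + 1)) ∈
      nhdsWithin (tk ω σ γ k) (Ioi (tk ω σ γ k)) :=
    Filter.inter_mem self_mem_nhdsWithin
      (nhdsWithin_le_nhds (Iio_mem_nhds (tk_lt_succ hω hγ hσ k)))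
  filter_upwards [hmem] with y hy
  exact X_eq_F hω hγ hσ N hN k hk y ⟨hy.1.le, hy.2.le⟩

include hω hγ hσ in
lemma left_deriv_succ (N : ℤ) (hN : ω = 2 * N) (k : ℤ) (hk : 0 ≤ k) :
    HasDerivWithinAt (X ω σ γ) (vk ω σ γ (k + 1)) (Iio (tk ω σ γ (k + 1)))
      (tk ω σ γ (k + 1)) := by
  have h := (hasDerivAt_F (ω := ω) (σ := σ) (γ := γ) k (tk ω σ γ (k + 1))).hasDerivWithinAt
    (s := Iio (tk ω σ γ (k + 1)))
  rw [Fd_tk_succ hω k N hN] at h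
  apply h.congr_of_eventuallyEq _ (X_eq_F hω hγ hσ N hN k hk _
    ⟨(tk_lt_succ hω hγ hσ k).le, le_refl _⟩)
  have hmem : Ioi (tk ω σ γ k) ∩ Iio (tk ω σ γ (k + 1)) ∈
      nhdsWithin (tk ω σ γ (k + 1)) (Iio (tk ω σ γ (k + 1))) :=
    Filter.inter_mem (nhdsWithin_le_nhds (Ioi_mem_nhds (tk_lt_succ hω hγ hσ k)))
      self_mem_nhdsWithin
  filter_upwards [hmem] with y hy
  exact X_eq_F hω hγ hσ N hN k hk y ⟨hy.1.le, hy.2.le⟩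

include hω hγ hσ in
lemma left_deriv_zero :
    HasDerivWithinAt (X ω σ γ) (vk ω σ γ 0) (Iio (tk ω σ γ 0)) (tk ω σ γ 0) := by
  have h : HasDerivAt (fun s => σ + v0 ω γ * (s - tk ω σ γ 0)) (v0 ω γ) (tk ω σ γ 0) := by
    simpa using (((hasDerivAt_id (tk ω σ γ 0)).sub_const (tk ω σ γ 0)).const_mul
      (v0 ω γ)).const_add σ
  have h' := h.hasDerivWithinAt (s := Iio (tk ω σ γ 0))
  have hv : vk ω σ γ 0 = v0 ω γ := by simp [vk]
  rw [hv]
  apply h'.congr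
  · intro y hy
    rw [X, if_pos (le_of_lt hy)]
  · rw [X, if_pos (le_refl _)]

include hω hγ hσ in
lemma X_cont (N : ℤ) (hN : ω = 2 * N) : Continuous (X ω σ γ) := by
  rw [continuous_iff_continuousAt]
  intro s
  rcases lt_trichotomy s (tk ω σ γ 0) with h | h | h
  · have hc : ContinuousAt (fun y => σ + v0 ω γ * (y - tk ω σ γ 0)) s := by fun_prop
    apply hc.congr
    filter_upwards [Iio_mem_nhds h] with y hy
    rw [X, if_pos (le_of_lt hy)]
  · subst h
    rw [← continuousWithinAt_compl_self, ← Iio_union_Ioi]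
    exact (left_deriv_zero hω hγ hσ).continuousWithinAt.union
      ((right_deriv hω hγ hσ N hN 0 (le_refl _)).continuousWithinAt)
  · obtain ⟨hk0, hmem⟩ := floor_mem hω hγ hσ N hN s h
    set k := ⌊(s - tk ω σ γ 0) / π⌋ with hkdef
    rcases lt_or_eq_of_le hmem.1 with h1 | h1
    · exact (hasDerivAt_X_Ioo hω hγ hσ N hN k hk0 s ⟨h1, hmem.2⟩).continuousAt
    · have hk1 : 1 ≤ k := by
        by_contra hcon
        push_neg at hcon
        have hke : k = 0 := by omega
        rw [hke] at h1
        rw [← h1] at h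
        exact lt_irrefl _ h
      rw [← continuousWithinAt_compl_self, ← Iio_union_Ioi, ← h1]
      have hl : HasDerivWithinAt (X ω σ γ) (vk ω σ γ ((k - 1) + 1))
          (Iio (tk ω σ γ ((k - 1) + 1))) (tk ω σ γ ((k - 1) + 1)) :=
        left_deriv_succ hω hγ hσ N hN (k - 1) (by omega)
      rw [show k - 1 + 1 = k by ring] at hl
      exact hl.continuousWithinAt.union
        ((right_deriv hω hγ hσ N hN k hk0).continuousWithinAt)

end hyp

end IAux

open IAux

/-- At the resonant frequencies `ω = 2n` with `|σ| < |γ|`, `γ = 1/(1 - ω²)`,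
the elastic impact oscillator `x'' + x = cos (ω t)` has unbounded trajectories:
there is an elastic impacting motion whose impact velocities tend to infinity. -/
theorem impact_oscillator_unbounded_trajectory
    (n : ℕ) (hn : 0 < n) (ω σ γ : ℝ) (hω : ω = 2 * n)
    (hγ : γ = 1 / (1 - ω ^ 2)) (hσ : |σ| < |γ|) :
    ∃ (t v : ℕ → ℝ) (x : ℝ → ℝ),
      ElasticImpactingMotion (fun s => Real.cos (ω * s)) σ t v x ∧
      Filter.Tendsto v Filter.atTop Filter.atTop := by
  have hn1 : (1:ℝ) ≤ (n:ℝ) := by exact_mod_cast hn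
  have hω2 : (2:ℝ) ≤ ω := by rw [hω]; linarith
  have hωpos : (0:ℝ) < ω := by linarith
  have hden : 1 - ω ^ 2 < 0 := by nlinarith
  have hγneg : γ < 0 := by rw [hγ]; exact div_neg_of_pos_of_neg one_pos hden
  have hγ1 : γ * (1 - ω ^ 2) = 1 := by
    rw [hγ]
    field_simp
    exact div_self (ne_of_lt hden)
  have hσ' : |σ| < -γ := by rwa [abs_of_neg hγneg] at hσ
  set N : ℤ := (n : ℤ) with hNdef
  have hN : ω = 2 * ((N:ℤ):ℝ) := by rw [hω, hNdef]; push_cast; ring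
  have hcast : ∀ m : ℕ, ((m + 1 : ℕ) : ℤ) = (m : ℤ) + 1 := fun m => by push_cast; ring
  refine ⟨fun m => tk ω σ γ m, fun m => vk ω σ γ m, X ω σ γ,
    ⟨?_, ?_, ?_, ?_, ?_, ?_, ?_⟩, ?_⟩
  · -- StrictMono
    intro a b hab
    have hπ := Real.pi_pos
    have hab' : ((a:ℤ):ℝ) < ((b:ℤ):ℝ) := by exact_mod_cast hab
    show tk ω σ γ (a:ℤ) < tk ω σ γ (b:ℤ)
    rw [tk_eq (a:ℤ), tk_eq (b:ℤ)]
    nlinarith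
  · -- Tendsto t atTop
    have h : Filter.Tendsto (fun m : ℕ => tk ω σ γ 0 + (m:ℝ) * π)
        Filter.atTop Filter.atTop :=
      Filter.tendsto_atTop_add_const_left _ _
        (Filter.Tendsto.atTop_mul_const Real.pi_pos tendsto_natCast_atTop_atTop)
    refine h.congr fun m => ?_
    rw [tk_eq (m:ℤ)]; push_cast; ring
  · exact X_cont hωpos hγneg hσ' N hN
  · exact fun s => X_le hωpos hγneg hσ' N hN s
  · -- x (t m) = σ
    intro m
    have hmem : tk ω σ γ m ∈ Set.Icc (tk ω σ γ m) (tk ω σ γ ((m:ℤ) + 1)) :=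
      ⟨le_refl _, (tk_lt_succ hωpos hγneg hσ' m).le⟩
    show X ω σ γ (tk ω σ γ (m:ℤ)) = σ
    rw [X_eq_F hωpos hγneg hσ' N hN m (Int.natCast_nonneg m) _ hmem,
      F_tk hωpos hγneg hσ' N hN m]
  · -- interior ODE
    intro m
    refine ⟨Fd ω σ γ m, fun s hs => ?_, fun s hs => ?_⟩
    · simp only [] at hs
      rw [hcast m] at hs
      exact hasDerivAt_X_Ioo hωpos hγneg hσ' N hN m (Int.natCast_nonneg m) s hs
    · simp only [] at hs
      rw [hcast m] at hs
      show HasDerivAt _ (Real.cos (ω * s) - X ω σ γ s) s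
      rw [X_eq_F hωpos hγneg hσ' N hN m (Int.natCast_nonneg m) s
        (Set.Ioo_subset_Icc_self hs)]
      exact hasDerivAt_Fd hγ1 m s
  · -- impact velocities
    intro m
    refine ⟨vk_pos hωpos hγneg hσ' m (Int.natCast_nonneg m), ?_, ?_⟩
    · cases m with
      | zero =>
        simpa using left_deriv_zero hωpos hγneg hσ'
      | succ j =>
        have h := left_deriv_succ hωpos hγneg hσ' N hN j (Int.natCast_nonneg j)
        show HasDerivWithinAt (X ω σ γ) (vk ω σ γ ((j + 1 : ℕ) : ℤ))
          (Set.Iio (tk ω σ γ ((j + 1 : ℕ) : ℤ))) (tk ω σ γ ((j + 1 : ℕ) : ℤ))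
        rw [hcast j]
        exact h
    · exact right_deriv hωpos hγneg hσ' N hN m (Int.natCast_nonneg m)
  · -- Tendsto v atTop
    have h : Filter.Tendsto (fun m : ℕ => v0 ω γ + (m:ℝ) * d0 ω σ γ)
        Filter.atTop Filter.atTop :=
      Filter.tendsto_atTop_add_const_left _ _
        (Filter.Tendsto.atTop_mul_const (d0_pos hωpos hγneg hσ')
          tendsto_natCast_atTop_atTop)
    refine h.congr fun m => ?_
    rw [vk]; push_cast; ring
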